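/- For p > 0 and integers k, n ≥ 1, the integral ∫_{ℋ_k} |z|^{-pnk} dV(z, w) over ℋ_k = {(z,w) ∈ ℂ^{1+n} : Σ|w_j|² < |z|^{2k} < 1} equals (2π^{n+1}/n!) ∫₀¹ r^{1 − pnk + 2nk} dr, hence is finite if and only if p < (2nk + 2)/(nk), in which case it equals 2π^{n+1}/(n!(2 + 2nk − pnk)). -/

import Mathlib

open MeasureTheory Finset
open scoped ENNReal NNReal
open Metric Set

/-- The generalized Hartogs triangle `ℋ_k ⊂ ℂ^{1+n}`. -/
def HartogsK (n k : ℕ) : Set (ℂ × (Fin n → ℂ)) :=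
  {p | ∑ j, ‖p.2 j‖ ^ 2 < ‖p.1‖ ^ (2 * k) ∧ ‖p.1‖ ^ (2 * k) < 1}


lemma lintegral_norm_complex (g : ℝ → ℝ≥0∞) (hg : Measurable g) :
    ∫⁻ z : ℂ, g (‖z‖) = 2 * (NNReal.pi : ℝ≥0∞) * ∫⁻ y in Ioi (0:ℝ), ENNReal.ofReal y * g y := by
  have h0 := lintegral_subtype_comap (μ := (volume : Measure ℂ))
    (measurableSet_singleton (0:ℂ)).compl (fun z => g (‖z‖))
  rw [restrict_compl_singleton] at h0
  have h1 := (volume : Measure ℂ).measurePreserving_homeomorphUnitSphereProd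
  have hgm : Measurable fun q : sphere (0:ℂ) 1 × Ioi (0:ℝ) => g q.2 :=
    hg.comp (measurable_subtype_coe.comp measurable_snd)
  have h2 : ∫⁻ x : ({0}ᶜ : Set ℂ), g (‖x.1‖) ∂(volume.comap (Subtype.val : ({0}ᶜ : Set ℂ) → ℂ)) =
      ∫⁻ q : sphere (0:ℂ) 1 × Ioi (0:ℝ), g q.2
        ∂((volume : Measure ℂ).toSphere.prod
          (Measure.volumeIoiPow (Module.finrank ℝ ℂ - 1))) := by
      simpa only [homeomorphUnitSphereProd_apply_snd_coe] using h1.lintegral_comp hgm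
  have h3 : ∫⁻ q : sphere (0:ℂ) 1 × Ioi (0:ℝ), g q.2
        ∂((volume : Measure ℂ).toSphere.prod
          (Measure.volumeIoiPow (Module.finrank ℝ ℂ - 1))) =
      ((volume : Measure ℂ).toSphere univ) *
        ∫⁻ y : Ioi (0:ℝ), g y ∂(Measure.volumeIoiPow (Module.finrank ℝ ℂ - 1)) := by
    rw [MeasureTheory.lintegral_prod _ hgm.aemeasurable]
    simp [lintegral_const, mul_comm]
  have h4 : (volume : Measure ℂ).toSphere univ = 2 * (NNReal.pi : ℝ≥0∞) := by
    rw [Measure.toSphere_apply_univ, Complex.finrank_real_complex, Complex.volume_ball]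
    simp
  have h5 : ∫⁻ y : Ioi (0:ℝ), g y ∂(Measure.volumeIoiPow (Module.finrank ℝ ℂ - 1)) =
      ∫⁻ y in Ioi (0:ℝ), ENNReal.ofReal y * g y := by
    rw [Complex.finrank_real_complex, Measure.volumeIoiPow,
      lintegral_withDensity_eq_lintegral_mul _
        ((measurable_subtype_coe.pow_const _).ennreal_ofReal)
        (g := fun y : Ioi (0:ℝ) => g y.1) (hg.comp measurable_subtype_coe)]
    simp_rw [Pi.mul_apply]
    rw [lintegral_subtype_comap measurableSet_Ioi
      (fun y : ℝ => ENNReal.ofReal (y ^ (2-1)) * g y)]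
    simp
  rw [← h0, h2, h3, h4, h5]

lemma slice_volume (n k : ℕ) (hn : 1 ≤ n) (hk : 1 ≤ k) (z : ℂ) :
    volume {w : Fin n → ℂ | ∑ j, ‖w j‖ ^ 2 < ‖z‖ ^ (2 * k)} =
      ENNReal.ofReal (‖z‖ ^ k) ^ (2 * n) *
        ENNReal.ofReal (Real.pi ^ n / n.factorial) := by
  have : Nonempty (Fin n) := Fin.pos_iff_nonempty.mp hn
  have hset : {w : Fin n → ℂ | ∑ j, ‖w j‖ ^ 2 < ‖z‖ ^ (2 * k)} =
      {w : Fin n → ℂ | (∑ j, ‖w j‖ ^ (2:ℝ)) ^ ((1:ℝ)/2) < ‖z‖ ^ k} := by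
    ext w
    have hS : (0:ℝ) ≤ ∑ j, ‖w j‖ ^ 2 := Finset.sum_nonneg fun j _ => by positivity
    have he : ∑ j, ‖w j‖ ^ (2:ℝ) = ∑ j, ‖w j‖ ^ 2 := by
      refine Finset.sum_congr rfl fun j _ => ?_
      rw [← Real.rpow_natCast ‖w j‖ 2]; norm_num
    simp only [mem_setOf_eq, he, ← Real.sqrt_eq_rpow]
    rcases eq_or_lt_of_le (norm_nonneg z) with hz | hz
    · have h0 : ‖z‖ = 0 := hz.symm
      have e1 : ‖z‖ ^ (2 * k) = 0 := by rw [h0, zero_pow (by omega)]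
      have e2 : ‖z‖ ^ k = 0 := by rw [h0, zero_pow (by omega)]
      rw [e1, e2]
      constructor
      · intro h; exact absurd h (not_lt.2 hS)
      · intro h; exact absurd h (not_lt.2 (Real.sqrt_nonneg _))
    · have hzk : 0 < ‖z‖ ^ k := pow_pos hz k
      rw [Real.sqrt_lt' hzk, ← pow_mul, mul_comm k 2]
  rw [hset, Complex.volume_sum_rpow_lt (Fin n) one_le_two (‖z‖ ^ k)]
  have h1 : (2:ℝ) / 2 + 1 = 2 := by norm_num
  have h2 : 2 * (n : ℝ) / 2 + 1 = n + 1 := by ring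
  rw [Fintype.card_fin, h1, h2, Real.Gamma_two, mul_one, Real.Gamma_nat_eq_factorial]

lemma radial_fin {a : ℝ} (ha : -1 < a) :
    ∫⁻ y in Ioo (0:ℝ) 1, ENNReal.ofReal (y ^ a) = ENNReal.ofReal (1 / (a + 1)) := by
  have hint : IntegrableOn (fun y : ℝ => y ^ a) (Ioo 0 1) :=
    (intervalIntegral.integrableOn_Ioo_rpow_iff one_pos).2 ha
  rw [← ofReal_integral_eq_lintegral_ofReal hint]
  · congr 1
    have h1 : ∫ y in Ioo (0:ℝ) 1, y ^ a = ∫ y in Set.Ioc (0:ℝ) 1, y ^ a :=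
      setIntegral_congr_set Ioo_ae_eq_Ioc
    rw [h1, ← intervalIntegral.integral_of_le zero_le_one,
      integral_rpow (Or.inl ha), Real.one_rpow, Real.zero_rpow (by linarith)]
    norm_num
  · filter_upwards [ae_restrict_mem measurableSet_Ioo] with y hy
    exact Real.rpow_nonneg hy.1.le a

lemma radial_top {a : ℝ} (ha : a ≤ -1) :
    ∫⁻ y in Ioo (0:ℝ) 1, ENNReal.ofReal (y ^ a) = ⊤ := by
  by_contra hfin
  have hint : IntegrableOn (fun y : ℝ => y ^ a) (Ioo 0 1) := by
    refine ⟨(by fun_prop : Measurable fun y : ℝ => y ^ a).aestronglyMeasurable, ?_⟩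
    rw [hasFiniteIntegral_iff_norm]
    have he : ∀ᵐ y ∂(volume.restrict (Ioo (0:ℝ) 1)),
        ENNReal.ofReal ‖y ^ a‖ = ENNReal.ofReal (y ^ a) := by
      filter_upwards [ae_restrict_mem measurableSet_Ioo] with y hy
      rw [Real.norm_eq_abs, abs_of_nonneg (Real.rpow_nonneg hy.1.le a)]
    rw [lintegral_congr_ae he]
    exact lt_top_iff_ne_top.2 hfin
  rw [intervalIntegral.integrableOn_Ioo_rpow_iff one_pos] at hint
  linarith

lemma hartogsK_isOpen (n k : ℕ) : IsOpen (HartogsK n k) := by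
  have hc1 : Continuous fun q : ℂ × (Fin n → ℂ) => ∑ j, ‖q.2 j‖ ^ 2 := by fun_prop
  have hc2 : Continuous fun q : ℂ × (Fin n → ℂ) => ‖q.1‖ ^ (2 * k) := by fun_prop
  have : HartogsK n k = {q | ∑ j, ‖q.2 j‖ ^ 2 < ‖q.1‖ ^ (2 * k)} ∩
      {q | ‖q.1‖ ^ (2 * k) < 1} := by ext q; simp [HartogsK, mem_setOf_eq]
  rw [this]
  exact (isOpen_lt hc1 hc2).inter (isOpen_lt hc2 continuous_const)

lemma hartogs_lintegral (n k : ℕ) (hn : 1 ≤ n) (hk : 1 ≤ k) (e : ℝ) :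
    ∫⁻ q in HartogsK n k, ENNReal.ofReal (‖q.1‖ ^ e) =
      2 * (NNReal.pi : ℝ≥0∞) *
        ((∫⁻ y in Ioo (0:ℝ) 1, ENNReal.ofReal (y ^ (e + 2*n*k + 1))) *
          ENNReal.ofReal (Real.pi ^ n / n.factorial)) := by
  set C := ENNReal.ofReal (Real.pi ^ n / n.factorial) with hC
  set G : ℝ → ℝ≥0∞ :=
    (Ioo (0:ℝ) 1).indicator (fun y => ENNReal.ofReal (y ^ (e + 2*n*k)) * C) with hG
  have hS : MeasurableSet (HartogsK n k) := (hartogsK_isOpen n k).measurableSet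
  have hGm : Measurable G := by
    refine Measurable.indicator ?_ measurableSet_Ioo
    exact (Measurable.ennreal_ofReal (by fun_prop)).mul_const C
  -- step 1: Tonelli
  have step1 : ∫⁻ q in HartogsK n k, ENNReal.ofReal (‖q.1‖ ^ e) =
      ∫⁻ z : ℂ, G (‖z‖) := by
    rw [← lintegral_indicator hS, Measure.volume_eq_prod,
      MeasureTheory.lintegral_prod]
    · refine lintegral_congr fun z => ?_
      have hslice : ∀ w : Fin n → ℂ,
          (HartogsK n k).indicator (fun q : ℂ × (Fin n → ℂ) => ENNReal.ofReal (‖q.1‖ ^ e)) (z, w)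
          = ((Prod.mk z ⁻¹' HartogsK n k)).indicator
              (fun _ => ENNReal.ofReal (‖z‖ ^ e)) w := by
        intro w
        by_cases h : (z, w) ∈ HartogsK n k <;> simp [h, indicator]
      simp_rw [hslice]
      rw [lintegral_indicator (measurable_prodMk_left hS), setLIntegral_const]
      -- now compute  ofReal(‖z‖^e) * volume (slice)  = G ‖z‖
      rcases lt_trichotomy (‖z‖) 0 with h | h | h
      · exact absurd h (not_lt.2 (norm_nonneg z))
      · have hz2 : (Prod.mk z ⁻¹' HartogsK n k) = ∅ :=
          eq_empty_iff_forall_notMem.2 fun w hw => by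
            have h1 := hw.1
            rw [h, zero_pow (by omega : 2 * k ≠ 0)] at h1
            have hnn : (0:ℝ) ≤ ∑ j, ‖w j‖ ^ 2 := Finset.sum_nonneg fun j _ => by positivity
            exact absurd h1 (not_lt.2 hnn)
        have hnm : ‖z‖ ∉ Ioo (0:ℝ) 1 := by rw [h]; simp
        rw [hz2, measure_empty, mul_zero, hG]
        exact (indicator_of_notMem hnm _).symm
      · by_cases h1 : ‖z‖ < 1
        · have hlt : ‖z‖ ^ (2 * k) < 1 := pow_lt_one₀ (norm_nonneg z) h1 (by omega)
          have hz2 : (Prod.mk z ⁻¹' HartogsK n k) =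
              {w : Fin n → ℂ | ∑ j, ‖w j‖ ^ 2 < ‖z‖ ^ (2 * k)} := by
            ext w
            simp only [HartogsK, Set.mem_preimage, mem_setOf_eq]
            exact ⟨fun hh => hh.1, fun hh => ⟨hh, hlt⟩⟩
          rw [hz2, slice_volume n k hn hk z]
          have hmem : ‖z‖ ∈ Ioo (0:ℝ) 1 := ⟨h, h1⟩
          rw [hG]
          rw [indicator_of_mem hmem]
          have e1 : ENNReal.ofReal (‖z‖ ^ k) ^ (2 * n) =
              ENNReal.ofReal (‖z‖ ^ (k * (2 * n))) := by
            rw [← ENNReal.ofReal_pow (by positivity), ← pow_mul]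
          have e2 : ENNReal.ofReal (‖z‖ ^ e) * ENNReal.ofReal (‖z‖ ^ (k * (2 * n))) =
              ENNReal.ofReal (‖z‖ ^ (e + 2*n*k)) := by
            rw [← ENNReal.ofReal_mul (by positivity), ← Real.rpow_natCast (‖z‖) (k * (2*n)),
              ← Real.rpow_add h]
            congr 2
            push_cast; ring
          rw [e1, ← mul_assoc, e2]
        · have hz2 : (Prod.mk z ⁻¹' HartogsK n k) = ∅ :=
            eq_empty_iff_forall_notMem.2 fun w hw =>
              absurd hw.2 (not_lt.2 (one_le_pow₀ (not_lt.1 h1) : 1 ≤ ‖z‖ ^ (2 * k)))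
          have hnm : ‖z‖ ∉ Ioo (0:ℝ) 1 := fun hm => h1 hm.2
          rw [hz2, measure_empty, mul_zero, hG]
          exact (indicator_of_notMem hnm _).symm
    · exact (Measurable.indicator (Measurable.ennreal_ofReal (by fun_prop)) hS).aemeasurable
  -- step 2: polar coordinates
  rw [step1, lintegral_norm_complex G hGm]
  congr 1
  -- step 3: compute the radial integral
  have key : ∀ y : ℝ, ENNReal.ofReal y * G y =
      (Ioo (0:ℝ) 1).indicator (fun y => ENNReal.ofReal (y ^ (e + 2*n*k + 1)) * C) y := by
    intro y
    by_cases hy : y ∈ Ioo (0:ℝ) 1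
    · rw [hG]
      rw [indicator_of_mem hy, indicator_of_mem hy, ← mul_assoc,
        ← ENNReal.ofReal_mul hy.1.le]
      congr 2
      nth_rewrite 1 [← Real.rpow_one y]
      rw [← Real.rpow_add hy.1]
      congr 1
      ring
    · rw [hG, indicator_of_notMem hy, indicator_of_notMem hy, mul_zero]
  simp_rw [key]
  rw [lintegral_indicator measurableSet_Ioo, Measure.restrict_restrict measurableSet_Ioo,
    Set.inter_eq_left.2 Set.Ioo_subset_Ioi_self, lintegral_mul_const' _ _ (by simp [hC])]

/-- For `p > 0`, `∫_{ℋ_k} |z|^{-pnk} dV` is finite iff `p < (2nk+2)/(nk)`, in which case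
it equals `2π^{n+1}/(n!(2 + 2nk − pnk))`. -/
theorem integral_abs_z_pow_HartogsK (n k : ℕ) (hn : 1 ≤ n) (hk : 1 ≤ k) (p : ℝ) (hp : 0 < p) :
    (p < (2 * n * k + 2) / (n * k) →
      IntegrableOn (fun q : ℂ × (Fin n → ℂ) => ‖q.1‖ ^ (-(p * n * k))) (HartogsK n k) volume ∧
      ∫ q in HartogsK n k, ‖q.1‖ ^ (-(p * n * k)) =
        2 * Real.pi ^ (n + 1) / ((Nat.factorial n : ℝ) * (2 + 2 * n * k - p * n * k))) ∧
    ((2 * n * k + 2) / (n * k) ≤ p →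
      ¬ IntegrableOn (fun q : ℂ × (Fin n → ℂ) => ‖q.1‖ ^ (-(p * n * k))) (HartogsK n k) volume) := by
  have hnk : (0:ℝ) < (n:ℝ) * k := by
    have : 0 < n * k := Nat.mul_pos hn hk
    exact_mod_cast this
  have hC0 : (0:ℝ) < Real.pi ^ n / n.factorial := by positivity
  have hrng : p * ((n:ℝ) * k) = p * n * k := by ring
  have key := hartogs_lintegral n k hn hk (-(p * n * k))
  have hmeas : Measurable fun q : ℂ × (Fin n → ℂ) => ‖q.1‖ ^ (-(p * n * k)) := by fun_prop
  have hnn : ∀ q : ℂ × (Fin n → ℂ), 0 ≤ ‖q.1‖ ^ (-(p * n * k)) :=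
    fun q => Real.rpow_nonneg (norm_nonneg _) _
  have hofReal : ∫⁻ q in HartogsK n k, ENNReal.ofReal ‖‖q.1‖ ^ (-(p * n * k))‖ =
      ∫⁻ q in HartogsK n k, ENNReal.ofReal (‖q.1‖ ^ (-(p * n * k))) :=
    lintegral_congr fun q => by rw [Real.norm_eq_abs, abs_of_nonneg (hnn q)]
  constructor
  · intro hlt
    have h2 : p * ((n:ℝ) * k) < 2 * n * k + 2 := (lt_div_iff₀ hnk).1 hlt
    have ha1 : (-1:ℝ) < -(p * n * k) + 2 * n * k + 1 := by linarith [hrng]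
    have hval : ∫⁻ q in HartogsK n k, ENNReal.ofReal (‖q.1‖ ^ (-(p * n * k))) =
        2 * (NNReal.pi : ℝ≥0∞) *
          (ENNReal.ofReal (1 / (-(p * n * k) + 2 * n * k + 1 + 1)) *
            ENNReal.ofReal (Real.pi ^ n / n.factorial)) := by
      rw [key, radial_fin ha1]
    have hInt : IntegrableOn (fun q : ℂ × (Fin n → ℂ) => ‖q.1‖ ^ (-(p * n * k)))
        (HartogsK n k) volume := by
      refine ⟨hmeas.aestronglyMeasurable, ?_⟩
      rw [hasFiniteIntegral_iff_norm]
      rw [show (∫⁻ q, ENNReal.ofReal ‖‖q.1‖ ^ (-(p * n * k))‖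
            ∂((volume : Measure (ℂ × (Fin n → ℂ))).restrict (HartogsK n k))) =
          ∫⁻ q in HartogsK n k, ENNReal.ofReal ‖‖q.1‖ ^ (-(p * n * k))‖ from rfl,
        hofReal, hval]
      finiteness
    refine ⟨hInt, ?_⟩
    have hI := integral_eq_lintegral_of_nonneg_ae
      (μ := (volume : Measure (ℂ × (Fin n → ℂ))).restrict (HartogsK n k))
      (f := fun q : ℂ × (Fin n → ℂ) => ‖q.1‖ ^ (-(p * n * k)))
      (ae_of_all _ hnn) hmeas.aestronglyMeasurable
    rw [hI, hval]
    have hden : (0:ℝ) < -(p * n * k) + 2 * n * k + 1 + 1 := by linarith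
    rw [ENNReal.toReal_mul, ENNReal.toReal_mul, ENNReal.toReal_mul,
      ENNReal.toReal_ofNat, ENNReal.coe_toReal, NNReal.coe_real_pi,
      ENNReal.toReal_ofReal (by positivity : (0:ℝ) ≤ 1 / (-(p * n * k) + 2 * n * k + 1 + 1)),
      ENNReal.toReal_ofReal hC0.le, pow_succ]
    have hfac : (0:ℝ) < n.factorial := by positivity
    have hden2 : (0:ℝ) < 2 + 2 * (n:ℝ) * k - p * n * k := by linarith
    field_simp
    ring
  · intro hge hInt
    have h2 : 2 * (n:ℝ) * k + 2 ≤ p * ((n:ℝ) * k) := (div_le_iff₀ hnk).1 hge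
    have ha2 : -(p * n * k) + 2 * (n:ℝ) * k + 1 ≤ -1 := by linarith [hrng]
    have hval : ∫⁻ q in HartogsK n k, ENNReal.ofReal (‖q.1‖ ^ (-(p * n * k))) = ⊤ := by
      rw [key, radial_top ha2, ENNReal.top_mul
        (by simpa using (ENNReal.ofReal_pos.2 hC0).ne' :
          ENNReal.ofReal (Real.pi ^ n / n.factorial) ≠ 0),
        ENNReal.mul_top (mul_ne_zero (by norm_num)
          (ENNReal.coe_ne_zero.2 (by
            intro h
            have := NNReal.coe_real_pi
            rw [h] at this
            exact Real.pi_ne_zero (by simpa using this.symm))))]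
    have hfin := hInt.2
    rw [hasFiniteIntegral_iff_norm] at hfin
    rw [show (∫⁻ q, ENNReal.ofReal ‖‖q.1‖ ^ (-(p * n * k))‖
          ∂((volume : Measure (ℂ × (Fin n → ℂ))).restrict (HartogsK n k))) =
        ∫⁻ q in HartogsK n k, ENNReal.ofReal ‖‖q.1‖ ^ (-(p * n * k))‖ from rfl,
      hofReal, hval] at hfin
    exact absurd hfin (by simp)
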